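/- Let m, n, a, b be positive integers with 2 ≤ a < b, a | gcd(m,n), b | gcd(m,n), n(1/a − 1/b) ≥ 2, and m ≥ n². Then C((m+n)/a; m/a) > m · C((m+n)/b; m/b). -/

import Mathlib

lemma fact_le_fact_mul_pow (x : ℕ) : ∀ j : ℕ, (x + j).factorial ≤ x.factorial * (x + j) ^ j
  | 0 => by simp
  | (j+1) => by
    have ih := fact_le_fact_mul_pow x j
    calc (x + (j+1)).factorial = (x + j + 1) * (x + j).factorial := by
          rw [show x + (j+1) = (x + j) + 1 by ring, Nat.factorial_succ]
      _ ≤ (x + j + 1) * (x.factorial * (x + j) ^ j) := by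
          exact Nat.mul_le_mul_left _ ih
      _ ≤ (x + j + 1) * (x.factorial * (x + j + 1) ^ j) := by
          exact Nat.mul_le_mul_left _ (Nat.mul_le_mul_left _ (Nat.pow_le_pow_left (by omega) _))
      _ = x.factorial * (x + (j+1)) ^ (j+1) := by ring

theorem stmt_17 (m n a b : ℕ) (hm : 0 < m) (hn : 0 < n) (ha : 2 ≤ a) (hab : a < b)
    (ham : a ∣ Nat.gcd m n) (hbm : b ∣ Nat.gcd m n)
    (hgap : 2 ≤ n / a - n / b) (hmn : n ^ 2 ≤ m) :
    m * Nat.choose ((m + n) / b) (m / b) < Nat.choose ((m + n) / a) (m / a) := by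
  have ha0 : 0 < a := by omega
  have hb0 : 0 < b := by omega
  obtain ⟨A, hA⟩ := ham.trans (Nat.gcd_dvd_left m n)
  obtain ⟨Na, hNa⟩ := ham.trans (Nat.gcd_dvd_right m n)
  obtain ⟨B, hB⟩ := hbm.trans (Nat.gcd_dvd_left m n)
  obtain ⟨Nb, hNb⟩ := hbm.trans (Nat.gcd_dvd_right m n)
  have hma : m / a = A := by rw [hA, Nat.mul_div_cancel_left _ ha0]
  have hna : n / a = Na := by rw [hNa, Nat.mul_div_cancel_left _ ha0]
  have hmb : m / b = B := by rw [hB, Nat.mul_div_cancel_left _ hb0]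
  have hnb : n / b = Nb := by rw [hNb, Nat.mul_div_cancel_left _ hb0]
  have hdiva : (m + n) / a = A + Na := by
    rw [hA, hNa, ← Nat.mul_add, Nat.mul_div_cancel_left _ ha0]
  have hdivb : (m + n) / b = B + Nb := by
    rw [hB, hNb, ← Nat.mul_add, Nat.mul_div_cancel_left _ hb0]
  rw [hdiva, hdivb, hma, hmb, Nat.choose_symm_add, Nat.choose_symm_add]
  -- basic positivity
  have hA1 : 1 ≤ A := by
    rcases Nat.eq_zero_or_pos A with h | h
    · rw [h, Nat.mul_zero] at hA; omega
    · exact h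
  have hNb1 : 1 ≤ Nb := by
    rcases Nat.eq_zero_or_pos Nb with h | h
    · rw [h, Nat.mul_zero] at hNb; omega
    · exact h
  set k := Na - Nb with hk
  have hk2 : 2 ≤ k := by rw [hna, hnb] at hgap; omega
  have hNak : Na = Nb + k := by
    rw [hna, hnb] at hgap; omega
  -- B + Nb ≤ A
  have hnNb : n * Nb ≤ B := by
    have : b * (n * Nb) ≤ b * B := by
      calc b * (n * Nb) = n * (b * Nb) := by ring
        _ = n * n := by rw [← hNb]
        _ ≤ m := by nlinarith [hmn]
        _ = b * B := hB
    exact Nat.le_of_mul_le_mul_left this hb0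
  have hnA : (n + 1) * B ≤ n * A := by
    have h3a : 3 * a ≤ n := by
      have : 3 ≤ Na := by omega
      calc 3 * a = a * 3 := by ring
        _ ≤ a * Na := Nat.mul_le_mul_left _ this
        _ = n := hNa.symm
    have hab' : a * (n + 1) ≤ b * n := by nlinarith
    have : b * ((n + 1) * B) ≤ b * (n * A) := by
      calc b * ((n + 1) * B) = (n + 1) * (b * B) := by ring
        _ = (n + 1) * (a * A) := by rw [← hB, hA]
        _ = (a * (n + 1)) * A := by ring
        _ ≤ (b * n) * A := Nat.mul_le_mul_right _ hab'
        _ = b * (n * A) := by ring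
    exact Nat.le_of_mul_le_mul_left this hb0
  have hBA : B + Nb ≤ A := by
    have : n * (B + Nb) ≤ n * A := by
      calc n * (B + Nb) = n * B + n * Nb := by ring
        _ ≤ n * B + B := by omega
        _ = (n + 1) * B := by ring
        _ ≤ n * A := hnA
    exact Nat.le_of_mul_le_mul_left this hn
  -- m * Na^k < (A+1)^k
  have hkey : m * Na ^ k < (A + 1) ^ k := by
    have h1 : m * n ^ k ≤ m ^ k := by
      calc m * n ^ k ≤ m * n ^ (2 * (k - 1)) := by
            refine Nat.mul_le_mul_left _ (Nat.pow_le_pow_right hn ?_); omega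
        _ = m * (n ^ 2) ^ (k - 1) := by rw [← Nat.pow_mul]
        _ ≤ m * m ^ (k - 1) := Nat.mul_le_mul_left _ (Nat.pow_le_pow_left hmn _)
        _ = m ^ k := by rw [← Nat.pow_succ']; congr 1; omega
    have h2 : a ^ k * (m * Na ^ k) ≤ a ^ k * A ^ k := by
      calc a ^ k * (m * Na ^ k) = m * (a * Na) ^ k := by rw [Nat.mul_pow]; ring
        _ = m * n ^ k := by rw [← hNa]
        _ ≤ m ^ k := h1
        _ = (a * A) ^ k := by rw [← hA]
        _ = a ^ k * A ^ k := by rw [Nat.mul_pow]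
    have h3 : m * Na ^ k ≤ A ^ k :=
      Nat.le_of_mul_le_mul_left h2 (Nat.pow_pos ha0)
    calc m * Na ^ k ≤ A ^ k := h3
      _ < (A + 1) ^ k := Nat.pow_lt_pow_left (by omega) (by omega)
  -- factorial bound
  have hfact : Na.factorial ≤ Nb.factorial * Na ^ k := by
    have := fact_le_fact_mul_pow Nb k
    rw [← hNak] at this
    exact this
  -- descFactorial bounds
  have hub : Nb.factorial * ((B + Nb).choose Nb) ≤ (B + Nb) ^ Nb := by
    rw [← Nat.descFactorial_eq_factorial_mul_choose]
    exact Nat.descFactorial_le_pow _ _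
  have hlb : (A + 1) ^ Na ≤ Na.factorial * ((A + Na).choose Na) := by
    rw [← Nat.descFactorial_eq_factorial_mul_choose]
    have := Nat.pow_sub_le_descFactorial (A + Na) Na
    have he : A + Na + 1 - Na = A + 1 := by omega
    rwa [he] at this
  -- main chain
  have main : m * ((B + Nb).choose Nb) * (Nb.factorial * Na.factorial)
      < (A + Na).choose Na * (Nb.factorial * Na.factorial) := by
    calc m * ((B + Nb).choose Nb) * (Nb.factorial * Na.factorial)
        = m * (Nb.factorial * ((B + Nb).choose Nb)) * Na.factorial := by ring
      _ ≤ m * (B + Nb) ^ Nb * Na.factorial := by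
          exact Nat.mul_le_mul_right _ (Nat.mul_le_mul_left _ hub)
      _ ≤ m * A ^ Nb * (Nb.factorial * Na ^ k) :=
          Nat.mul_le_mul (Nat.mul_le_mul_left _ (Nat.pow_le_pow_left hBA _)) hfact
      _ = (m * Na ^ k) * (A ^ Nb * Nb.factorial) := by ring
      _ ≤ (m * Na ^ k) * ((A + 1) ^ Nb * Nb.factorial) := by
          exact Nat.mul_le_mul_left _ (Nat.mul_le_mul_right _ (Nat.pow_le_pow_left (by omega) _))
      _ < (A + 1) ^ k * ((A + 1) ^ Nb * Nb.factorial) := by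
          refine Nat.mul_lt_mul_of_lt_of_le hkey (le_refl _) ?_
          positivity
      _ = (A + 1) ^ Na * Nb.factorial := by rw [hNak, pow_add]; ring
      _ ≤ (Na.factorial * ((A + Na).choose Na)) * Nb.factorial :=
          Nat.mul_le_mul_right _ hlb
      _ = (A + Na).choose Na * (Nb.factorial * Na.factorial) := by ring
  have hpos : 0 < Nb.factorial * Na.factorial := by positivity
  exact Nat.lt_of_mul_lt_mul_right main
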